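/- Let {P_i}_{i=1}^N be the unique group of positive definite solutions to the HCREs, define P̄_i = (∑_{j=1}^N l_{ij} (P_j^{-1} + C_jᵀ R_j^{-1} C_j))^{-1}, let 𝒜 be the nN×nN block matrix whose (i,j) block is l_{ij} A P̄_i P_j^{-1}, let q ∈ ℝ^N be a vector with strictly positive entries satisfying qᵀ L = qᵀ, and let 𝒬 be the block-diagonal nN×nN matrix with diagonal blocks q_1 P_1^{-1}, …, q_N P_N^{-1}. Then there exists β ∈ (0, 1) such that 𝒜ᵀ 𝒬 𝒜 ≤ β 𝒬 in the Loewner order. -/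

import Mathlib

open Matrix

namespace HCREAux

variable {k : Type*} [Fintype k] [DecidableEq k]

lemma star_vec (x : k → ℝ) : star x = x := by
  funext a; simp

lemma psd_def {M : Matrix k k ℝ} (h1 : M.IsHermitian)
    (h2 : ∀ x : k → ℝ, 0 ≤ x ⬝ᵥ M *ᵥ x) : M.PosSemidef :=
  PosSemidef.of_dotProduct_mulVec_nonneg h1 fun x => by rw [star_vec]; exact h2 x

lemma psd_form {M : Matrix k k ℝ} (hM : M.PosSemidef) (x : k → ℝ) :
    0 ≤ x ⬝ᵥ M *ᵥ x := by
  have := hM.dotProduct_mulVec_nonneg x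
  rwa [star_vec] at this

lemma herm_transpose {M : Matrix k k ℝ} (h : M.IsHermitian) : Mᵀ = M := by
  rw [← conjTranspose_eq_transpose_of_trivial]; exact h

lemma dot_symm {M : Matrix k k ℝ} (hM : Mᵀ = M) (u v : k → ℝ) :
    u ⬝ᵥ M *ᵥ v = v ⬝ᵥ M *ᵥ u := by
  rw [dotProduct_mulVec, ← mulVec_transpose, hM, dotProduct_comm]

lemma dot_transpose_mulVec (M : Matrix k k ℝ) (v w : k → ℝ) :
    v ⬝ᵥ (Mᵀ *ᵥ w) = (M *ᵥ v) ⬝ᵥ w := by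
  rw [dotProduct_mulVec, vecMul_transpose]

open scoped MatrixOrder in
lemma trace_form {M : Matrix k k ℝ} (hM : M.PosSemidef) (x : k → ℝ) :
    x ⬝ᵥ M *ᵥ x ≤ M.trace * (x ⬝ᵥ x) := by
  set B := CFC.sqrt M with hB
  have hBB : B * B = M := CFC.sqrt_mul_sqrt_self M hM.nonneg
  have hBsym : Bᵀ = B := herm_transpose (CFC.sqrt_nonneg M).posSemidef.isHermitian
  have hform : x ⬝ᵥ M *ᵥ x = (B *ᵥ x) ⬝ᵥ (B *ᵥ x) := by
    rw [← hBB, ← mulVec_mulVec, dotProduct_mulVec, ← mulVec_transpose, hBsym]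
  have htr : M.trace = ∑ a, ∑ b, (B a b) ^ 2 := by
    rw [← hBB]
    simp only [Matrix.trace, Matrix.diag, Matrix.mul_apply]
    refine Finset.sum_congr rfl fun a _ => Finset.sum_congr rfl fun b _ => ?_
    have : B b a = B a b := by
      conv_lhs => rw [← hBsym]
      rfl
    rw [this, sq]
  rw [hform, htr]
  have key : ∀ a : k, ((B *ᵥ x) a) * ((B *ᵥ x) a) ≤ (∑ b, (B a b) ^ 2) * (x ⬝ᵥ x) := by
    intro a
    have := Finset.sum_mul_sq_le_sq_mul_sq Finset.univ (fun b => B a b) x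
    calc ((B *ᵥ x) a) * ((B *ᵥ x) a) = (∑ b, B a b * x b) ^ 2 := by
          rw [← sq]; rfl
      _ ≤ (∑ b, (B a b) ^ 2) * ∑ b, (x b) ^ 2 := this
      _ = (∑ b, (B a b) ^ 2) * (x ⬝ᵥ x) := by
          congr 1
          simp [dotProduct, sq]
  calc (B *ᵥ x) ⬝ᵥ (B *ᵥ x) = ∑ a, ((B *ᵥ x) a) * ((B *ᵥ x) a) := rfl
    _ ≤ ∑ a, (∑ b, (B a b) ^ 2) * (x ⬝ᵥ x) := Finset.sum_le_sum fun a _ => key a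
    _ = (∑ a, ∑ b, (B a b) ^ 2) * (x ⬝ᵥ x) := by rw [Finset.sum_mul]

lemma posdef_form {M : Matrix k k ℝ} (hM : M.PosDef) {x : k → ℝ} (hx : x ≠ 0) :
    0 < x ⬝ᵥ M *ᵥ x := by
  have := hM.dotProduct_mulVec_pos hx
  rwa [star_vec] at this

lemma trace_pos [Nonempty k] {M : Matrix k k ℝ} (hM : M.PosDef) : 0 < M.trace := by
  have h : ∀ a : k, 0 < M a a := by
    intro a
    have hx : (Pi.single a 1 : k → ℝ) ≠ 0 := by
      intro h
      have := congrFun h a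
      simp at this
    have := posdef_form hM hx
    rwa [mulVec_single_one, single_dotProduct, one_mul] at this
  exact Finset.sum_pos (fun a _ => h a) Finset.univ_nonempty

lemma smul_posSemidef {c : ℝ} (hc : 0 ≤ c) {M : Matrix k k ℝ} (hM : M.PosSemidef) :
    (c • M).PosSemidef := by
  refine psd_def ?_ fun x => ?_
  · show (c • M)ᴴ = c • M
    rw [conjTranspose_eq_transpose_of_trivial, transpose_smul, herm_transpose hM.1]
  · rw [smul_mulVec, dotProduct_smul, smul_eq_mul]
    exact mul_nonneg hc (psd_form hM x)

lemma smul_posDef {c : ℝ} (hc : 0 < c) {M : Matrix k k ℝ} (hM : M.PosDef) :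
    (c • M).PosDef := by
  refine posDef_iff_dotProduct_mulVec.mpr ⟨?_, fun x hx => ?_⟩
  · show (c • M)ᴴ = c • M
    rw [conjTranspose_eq_transpose_of_trivial, transpose_smul, herm_transpose hM.1]
  · rw [star_vec, smul_mulVec, dotProduct_smul, smul_eq_mul]
    exact mul_pos hc (posdef_form hM hx)

lemma smul_inv {c : ℝ} (hc : c ≠ 0) {M : Matrix k k ℝ} (hM : IsUnit M.det) :
    (c • M)⁻¹ = c⁻¹ • M⁻¹ := by
  apply inv_eq_right_inv
  rw [Matrix.smul_mul, Matrix.mul_smul, smul_smul, mul_inv_cancel₀ hc,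
    Matrix.mul_nonsing_inv _ hM, one_smul]

lemma posSemidef_sum {ι : Type*} (s : Finset ι) (f : ι → Matrix k k ℝ)
    (h : ∀ i ∈ s, (f i).PosSemidef) : (∑ i ∈ s, f i).PosSemidef := by
  classical
  induction s using Finset.induction_on with
  | empty => simpa using Matrix.PosSemidef.zero
  | insert _ _ hni ih =>
    rename_i a s'
    rw [Finset.sum_insert hni]
    exact (h a (Finset.mem_insert_self a s')).add (ih fun i hi => h i (Finset.mem_insert_of_mem hi))


lemma schur_key {Pm Pb A : Matrix k k ℝ} (hP : Pm.PosDef) (hPb : Pb.PosDef) {c : ℝ}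
    (hc : 0 < c) (h : (c • Pm - A * Pb * Aᵀ).PosSemidef) :
    (c • Pb - Pb * Aᵀ * Pm⁻¹ * (A * Pb)).PosSemidef := by
  have hPbT : Pbᵀ = Pb := herm_transpose hPb.1
  have hcPb : (c • Pb).PosDef := smul_posDef hc hPb
  haveI : Invertible Pm := hP.isUnit.invertible
  haveI : Invertible (c • Pb) := hcPb.isUnit.invertible
  have hBH : (A * Pb)ᴴ = Pb * Aᵀ := by
    rw [conjTranspose_eq_transpose_of_trivial, transpose_mul, hPbT]
  have h1 : (Pm - (A * Pb) * (c • Pb)⁻¹ * (A * Pb)ᴴ).PosSemidef := by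
    have hPbdet : IsUnit Pb.det := hPb.det_pos.ne'.isUnit
    have hinv : (c • Pb)⁻¹ = c⁻¹ • Pb⁻¹ := smul_inv hc.ne' hPbdet
    have heq : Pm - (A * Pb) * (c • Pb)⁻¹ * (A * Pb)ᴴ = c⁻¹ • (c • Pm - A * Pb * Aᵀ) := by
      rw [hinv, hBH]
      rw [Matrix.mul_smul, Matrix.smul_mul, smul_sub, smul_smul,
        inv_mul_cancel₀ hc.ne', one_smul]
      have h5 : A * Pb * Pb⁻¹ = A := Matrix.mul_nonsing_inv_cancel_right _ _ hPbdet
      have h6 : A * Pb * Pb⁻¹ * (Pb * Aᵀ) = A * Pb * Aᵀ := by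
        calc A * Pb * Pb⁻¹ * (Pb * Aᵀ) = A * Pb * Pb⁻¹ * Pb * Aᵀ := by
              rw [Matrix.mul_assoc (A * Pb * Pb⁻¹)]
          _ = A * Pb * Aᵀ := by rw [h5]
      rw [h6]
    rw [heq]
    exact smul_posSemidef (by positivity) h
  have h2 : (fromBlocks Pm (A * Pb) (A * Pb)ᴴ (c • Pb)).PosSemidef :=
    (PosDef.fromBlocks₂₂ Pm (A * Pb) hcPb).mpr h1
  have h3 := (PosDef.fromBlocks₁₁ (A * Pb) (c • Pb) hP).mp h2
  rwa [hBH] at h3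

lemma form_lower [Nonempty k] {Qm : Matrix k k ℝ} (hQ : Qm.PosDef) (x : k → ℝ) :
    x ⬝ᵥ x ≤ (Qm⁻¹).trace * (x ⬝ᵥ Qm *ᵥ x) := by
  set d := (Qm⁻¹).trace with hd
  have hdpos : 0 < d := trace_pos hQ.inv
  haveI : Invertible Qm := hQ.isUnit.invertible
  have hd1 : ((d : ℝ) • (1 : Matrix k k ℝ)).PosDef := smul_posDef hdpos Matrix.PosDef.one
  haveI : Invertible ((d : ℝ) • (1 : Matrix k k ℝ)) := hd1.isUnit.invertible
  have h1 : ((d • (1 : Matrix k k ℝ)) - (1 : Matrix k k ℝ) * Qm⁻¹ *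
      (1 : Matrix k k ℝ)ᴴ).PosSemidef := by
    rw [conjTranspose_one, Matrix.mul_one, Matrix.one_mul]
    refine psd_def ?_ fun y => ?_
    · show _ = _
      rw [conjTranspose_eq_transpose_of_trivial, transpose_sub, transpose_smul,
        transpose_one, herm_transpose hQ.inv.1]
    · rw [sub_mulVec, dotProduct_sub, smul_mulVec, one_mulVec, dotProduct_smul,
        smul_eq_mul, sub_nonneg]
      exact trace_form hQ.inv.posSemidef y
  have h2 : (fromBlocks (d • (1 : Matrix k k ℝ)) (1 : Matrix k k ℝ)
      (1 : Matrix k k ℝ)ᴴ Qm).PosSemidef :=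
    (PosDef.fromBlocks₂₂ _ _ hQ).mpr h1
  have h3 := (PosDef.fromBlocks₁₁ (1 : Matrix k k ℝ) Qm hd1).mp h2
  have hinv : (d • (1 : Matrix k k ℝ))⁻¹ = d⁻¹ • (1 : Matrix k k ℝ) := by
    have : IsUnit (1 : Matrix k k ℝ).det := by simp
    simpa using smul_inv hdpos.ne' this
  rw [hinv, conjTranspose_one, Matrix.one_mul, Matrix.mul_one] at h3
  have h4 := psd_form h3 x
  rw [sub_mulVec, dotProduct_sub, smul_mulVec, one_mulVec, dotProduct_smul,
    smul_eq_mul, sub_nonneg] at h4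
  calc x ⬝ᵥ x = d * (d⁻¹ * (x ⬝ᵥ x)) := by field_simp
    _ ≤ d * (x ⬝ᵥ Qm *ᵥ x) := by
        exact mul_le_mul_of_nonneg_left h4 hdpos.le


lemma dotProduct_sum' {ι : Type*} (v : k → ℝ) (s : Finset ι) (f : ι → k → ℝ) :
    v ⬝ᵥ (∑ i ∈ s, f i) = ∑ i ∈ s, v ⬝ᵥ f i := by
  classical
  induction s using Finset.induction_on with
  | empty => simp
  | insert _ _ hni ih =>
    rename_i a s'
    rw [Finset.sum_insert hni, Finset.sum_insert hni, dotProduct_add, ih]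

lemma sum_mulVec' {ι : Type*} (s : Finset ι) (f : ι → Matrix k k ℝ) (v : k → ℝ) :
    (∑ i ∈ s, f i) *ᵥ v = ∑ i ∈ s, f i *ᵥ v := by
  classical
  induction s using Finset.induction_on with
  | empty => simp
  | insert _ _ hni ih =>
    rename_i a s'
    rw [Finset.sum_insert hni, Finset.sum_insert hni, add_mulVec, ih]

lemma mulVec_sum' {ι : Type*} (M : Matrix k k ℝ) (s : Finset ι) (f : ι → k → ℝ) :
    M *ᵥ (∑ i ∈ s, f i) = ∑ i ∈ s, M *ᵥ f i := by
  classical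
  induction s using Finset.induction_on with
  | empty => simp
  | insert _ _ hni ih =>
    rename_i a s'
    rw [Finset.sum_insert hni, Finset.sum_insert hni, mulVec_add, ih]

end HCREAux

open HCREAux

/-- For the unique positive definite solutions of the HCREs, the
steady-state block matrix `𝒜` with `(i,j)` block `l_{ij} A P̄_i P_j⁻¹` and the block
diagonal matrix `𝒬 = diag(q₁ P₁⁻¹, …, q_N P_N⁻¹)` (with `q` a positive left
Perron–Frobenius eigenvector of `L`) satisfy `𝒜ᵀ 𝒬 𝒜 ≤ β 𝒬` for some `β ∈ (0,1)`. -/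
theorem hcre_lyapunov_contraction
    (n N : ℕ) (hn : 0 < n) (hN : 0 < N)
    (m : Fin N → ℕ) (hm : ∀ i, 0 < m i)
    (A : Matrix (Fin n) (Fin n) ℝ) (hA : IsUnit A.det)
    (C : ∀ i : Fin N, Matrix (Fin (m i)) (Fin n) ℝ)
    (hObs : (∑ k ∈ Finset.range n, (A ^ k)ᵀ * (∑ i, (C i)ᵀ * C i) * A ^ k).PosDef)
    (Q : Matrix (Fin n) (Fin n) ℝ) (hQ : Q.PosDef)
    (R : ∀ i : Fin N, Matrix (Fin (m i)) (Fin (m i)) ℝ) (hR : ∀ i, (R i).PosDef)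
    (L : Matrix (Fin N) (Fin N) ℝ)
    (hLnonneg : ∀ i j, 0 ≤ L i j) (hLrow : ∀ i, ∑ j, L i j = 1)
    (hLprim : ∃ k : ℕ, 0 < k ∧ ∀ i j, 0 < (L ^ k) i j)
    (P : Fin N → Matrix (Fin n) (Fin n) ℝ) (hPpos : ∀ i, (P i).PosDef)
    (hsol : ∀ i, P i =
      A * (∑ j, (L i j • (P j)⁻¹ + L i j • ((C j)ᵀ * (R j)⁻¹ * C j)))⁻¹ * Aᵀ + Q)
    (Pbar : Fin N → Matrix (Fin n) (Fin n) ℝ)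
    (hPbar : ∀ i, Pbar i = (∑ j, L i j • ((P j)⁻¹ + (C j)ᵀ * (R j)⁻¹ * C j))⁻¹)
    (Acal : Matrix (Fin N × Fin n) (Fin N × Fin n) ℝ)
    (hAcal : ∀ p q : Fin N × Fin n,
      Acal p q = L p.1 q.1 * ((A * Pbar p.1 * (P q.1)⁻¹) p.2 q.2))
    (qv : Fin N → ℝ) (hqv : ∀ i, 0 < qv i)
    (hqL : ∀ j, ∑ i, qv i * L i j = qv j)
    (Qcal : Matrix (Fin N × Fin n) (Fin N × Fin n) ℝ)
    (hQcal : ∀ p q : Fin N × Fin n,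
      Qcal p q = if p.1 = q.1 then qv p.1 * ((P p.1)⁻¹ p.2 q.2) else 0) :
    ∃ β : ℝ, 0 < β ∧ β < 1 ∧ (β • Qcal - Acalᵀ * Qcal * Acal).PosSemidef := by
  classical
  haveI : Nonempty (Fin n) := ⟨⟨0, hn⟩⟩
  haveI : Nonempty (Fin N) := ⟨⟨0, hN⟩⟩
  -- basic PSD facts
  have hCT : ∀ j, ((C j)ᵀ * (R j)⁻¹ * C j).PosSemidef := by
    intro j
    have h := ((hR j).inv.posSemidef).conjTranspose_mul_mul_same (C j)
    rwa [conjTranspose_eq_transpose_of_trivial] at h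
  have hPinvPD : ∀ j, ((P j)⁻¹).PosDef := fun j => (hPpos j).inv
  -- the coupling matrices
  set Mm : Fin N → Matrix (Fin n) (Fin n) ℝ :=
    fun i => ∑ j, L i j • ((P j)⁻¹ + (C j)ᵀ * (R j)⁻¹ * C j) with hMm
  have hMmi : ∀ i, Mm i = ∑ j, L i j • ((P j)⁻¹ + (C j)ᵀ * (R j)⁻¹ * C j) :=
    fun i => by rw [hMm]
  have hMmPD : ∀ i, (Mm i).PosDef := by
    intro i
    obtain ⟨j0, hj0⟩ : ∃ j0, 0 < L i j0 := by
      by_contra hcon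
      push_neg at hcon
      have hz0 : ∀ j, L i j = 0 := fun j => le_antisymm (hcon j) (hLnonneg i j)
      have h1 := hLrow i
      rw [Finset.sum_congr rfl fun j _ => hz0 j] at h1
      simp at h1
    have hsplit : Mm i = L i j0 • ((P j0)⁻¹ + (C j0)ᵀ * (R j0)⁻¹ * C j0) +
        ∑ j ∈ Finset.univ.erase j0, L i j • ((P j)⁻¹ + (C j)ᵀ * (R j)⁻¹ * C j) := by
      rw [hMm]
      exact (Finset.add_sum_erase _ _ (Finset.mem_univ j0)).symm
    rw [hsplit]
    refine Matrix.PosDef.add_posSemidef ?_ ?_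
    · exact smul_posDef hj0 ((hPinvPD j0).add_posSemidef (hCT j0))
    · exact posSemidef_sum _ _ fun j _ =>
        smul_posSemidef (hLnonneg i j) (((hPinvPD j).posSemidef).add (hCT j))
  have hPbarEq : ∀ i, Pbar i = (Mm i)⁻¹ := fun i => hPbar i
  have hPbarPD : ∀ i, (Pbar i).PosDef := by
    intro i; rw [hPbarEq i]; exact (hMmPD i).inv
  have hMmPbar : ∀ i, Mm i * Pbar i = 1 := by
    intro i
    rw [hPbarEq i]
    exact Matrix.mul_nonsing_inv _ (hMmPD i).det_pos.ne'.isUnit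
  have hsol' : ∀ i, A * Pbar i * Aᵀ = P i - Q := by
    intro i
    have h := hsol i
    have hsum : (∑ j, (L i j • (P j)⁻¹ + L i j • ((C j)ᵀ * (R j)⁻¹ * C j))) = Mm i := by
      rw [hMm]
      exact Finset.sum_congr rfl fun j _ => (smul_add _ _ _).symm
    rw [hsum, ← hPbarEq i] at h
    rw [h]
    abel
  -- choose ε
  set c : Fin N → ℝ := fun i => (P i).trace with hcdef
  have hc : ∀ i, 0 < c i := fun i => trace_pos (hPpos i)
  set d : ℝ := (Q⁻¹).trace with hddef
  have hd : 0 < d := trace_pos hQ.inv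
  set ε : ℝ := min (1/2) (Finset.univ.inf' Finset.univ_nonempty fun i => (c i * d)⁻¹) with hεdef
  have hεpos : 0 < ε := by
    refine lt_min (by norm_num) ?_
    rw [Finset.lt_inf'_iff]
    exact fun i _ => inv_pos.mpr (mul_pos (hc i) hd)
  have hεle : ∀ i, ε ≤ (c i * d)⁻¹ := fun i =>
    (min_le_right _ _).trans (Finset.inf'_le _ (Finset.mem_univ i))
  have hεhalf : ε ≤ 1/2 := min_le_left _ _
  refine ⟨1 - ε, by linarith, by linarith, ?_⟩
  -- Q dominates ε P i
  have hQP : ∀ i, (Q - ε • P i).PosSemidef := by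
    intro i
    refine psd_def ?_ fun x => ?_
    · show _ = _
      rw [conjTranspose_eq_transpose_of_trivial, transpose_sub, transpose_smul,
        herm_transpose hQ.1, herm_transpose (hPpos i).1]
    · rw [sub_mulVec, dotProduct_sub, smul_mulVec, dotProduct_smul, smul_eq_mul,
        sub_nonneg]
      have h1 : x ⬝ᵥ P i *ᵥ x ≤ c i * (x ⬝ᵥ x) := trace_form (hPpos i).posSemidef x
      have h2 : x ⬝ᵥ x ≤ d * (x ⬝ᵥ Q *ᵥ x) := form_lower hQ x
      have h3 : 0 ≤ x ⬝ᵥ P i *ᵥ x := psd_form (hPpos i).posSemidef x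
      have h5 : x ⬝ᵥ P i *ᵥ x ≤ (c i * d) * (x ⬝ᵥ Q *ᵥ x) := by
        calc x ⬝ᵥ P i *ᵥ x ≤ c i * (x ⬝ᵥ x) := h1
          _ ≤ c i * (d * (x ⬝ᵥ Q *ᵥ x)) := mul_le_mul_of_nonneg_left h2 (hc i).le
          _ = (c i * d) * (x ⬝ᵥ Q *ᵥ x) := by ring
      calc ε * (x ⬝ᵥ P i *ᵥ x) ≤ (c i * d)⁻¹ * (x ⬝ᵥ P i *ᵥ x) :=
            mul_le_mul_of_nonneg_right (hεle i) h3
        _ ≤ (c i * d)⁻¹ * ((c i * d) * (x ⬝ᵥ Q *ᵥ x)) :=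
            mul_le_mul_of_nonneg_left h5 (inv_nonneg.mpr (mul_pos (hc i) hd).le)
        _ = x ⬝ᵥ Q *ᵥ x := by
            rw [← mul_assoc, inv_mul_cancel₀ (mul_pos (hc i) hd).ne', one_mul]
  -- the key Schur inequality per node
  have hKey : ∀ i, ((1 - ε) • Pbar i - Pbar i * Aᵀ * (P i)⁻¹ * (A * Pbar i)).PosSemidef := by
    intro i
    apply schur_key (hPpos i) (hPbarPD i) (by linarith : (0:ℝ) < 1 - ε)
    have heq : (1 - ε) • P i - A * Pbar i * Aᵀ = Q - ε • P i := by
      rw [hsol' i, sub_smul, one_smul]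
      abel
    rw [heq]
    exact hQP i
  -- symmetry of Qcal
  have hQcalSym : Qcalᵀ = Qcal := by
    ext p q
    rw [transpose_apply, hQcal, hQcal]
    rcases eq_or_ne p.1 q.1 with hpq | hpq
    · rw [if_pos hpq.symm, if_pos hpq, hpq]
      have hsym := herm_transpose (hPinvPD q.1).1
      have : (P q.1)⁻¹ q.2 p.2 = (P q.1)⁻¹ p.2 q.2 := by
        conv_lhs => rw [← hsym]
        rw [transpose_apply]
      rw [this]
    · rw [if_neg (Ne.symm hpq), if_neg hpq]
  have hHerm : ((1 - ε) • Qcal - Acalᵀ * Qcal * Acal).IsHermitian := by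
    show _ = _
    rw [conjTranspose_eq_transpose_of_trivial, transpose_sub, transpose_smul, hQcalSym,
      transpose_mul, transpose_mul, transpose_transpose, hQcalSym, Matrix.mul_assoc]
  refine psd_def hHerm fun x => ?_
  rw [sub_mulVec, dotProduct_sub, smul_mulVec, dotProduct_smul, smul_eq_mul, sub_nonneg]
  -- block decomposition of the quadratic forms
  set X : Fin N → Fin n → ℝ := fun i a => x (i, a) with hX
  set z : Fin N → Fin n → ℝ := fun i => ∑ j, L i j • ((P j)⁻¹ *ᵥ X j) with hz
  set w : Fin N → Fin n → ℝ := fun i => (A * Pbar i) *ᵥ z i with hw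
  set g : Fin N → ℝ := fun j => X j ⬝ᵥ (P j)⁻¹ *ᵥ X j with hg
  have hzi : ∀ i, z i = ∑ j, L i j • ((P j)⁻¹ *ᵥ X j) := fun i => by rw [hz]
  have hwi : ∀ i, w i = (A * Pbar i) *ᵥ z i := fun i => by rw [hw]
  have hgi : ∀ j, g j = X j ⬝ᵥ (P j)⁻¹ *ᵥ X j := fun j => by rw [hg]
  have hg0 : ∀ j, 0 ≤ g j := fun j => psd_form (hPinvPD j).posSemidef _
  have hQform : ∀ y : Fin N × Fin n → ℝ,
      y ⬝ᵥ Qcal *ᵥ y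
        = ∑ i, qv i * ((fun a => y (i, a)) ⬝ᵥ (P i)⁻¹ *ᵥ fun a => y (i, a)) := by
    intro y
    have hmv : ∀ p : Fin N × Fin n,
        (Qcal *ᵥ y) p = qv p.1 * (((P p.1)⁻¹ *ᵥ fun b => y (p.1, b)) p.2) := by
      intro p
      show ∑ q : Fin N × Fin n, Qcal p q * y q = _
      rw [Fintype.sum_prod_type]
      calc ∑ j, ∑ b, Qcal p (j, b) * y (j, b)
          = ∑ j, if p.1 = j then ∑ b, qv p.1 * ((P p.1)⁻¹ p.2 b) * y (j, b) else 0 := by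
            refine Finset.sum_congr rfl fun j _ => ?_
            by_cases h : p.1 = j <;> simp [hQcal, h, Finset.mul_sum]
        _ = ∑ b, qv p.1 * ((P p.1)⁻¹ p.2 b) * y (p.1, b) := by
            rw [Finset.sum_ite_eq]
            simp
        _ = qv p.1 * ∑ b, ((P p.1)⁻¹ p.2 b) * y (p.1, b) := by
            rw [Finset.mul_sum]
            exact Finset.sum_congr rfl fun b _ => by ring
        _ = qv p.1 * (((P p.1)⁻¹ *ᵥ fun b => y (p.1, b)) p.2) := rfl
    calc y ⬝ᵥ Qcal *ᵥ y = ∑ p : Fin N × Fin n, y p * (Qcal *ᵥ y) p := rfl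
      _ = ∑ i, ∑ a, y (i, a) * (qv i * (((P i)⁻¹ *ᵥ fun b => y (i, b)) a)) := by
          rw [Fintype.sum_prod_type]
          exact Finset.sum_congr rfl fun i _ => Finset.sum_congr rfl fun a _ => by
            rw [hmv (i, a)]
      _ = ∑ i, qv i * ((fun a => y (i, a)) ⬝ᵥ (P i)⁻¹ *ᵥ fun a => y (i, a)) := by
          refine Finset.sum_congr rfl fun i _ => ?_
          have hdp : ((fun a => y (i, a)) ⬝ᵥ (P i)⁻¹ *ᵥ fun a => y (i, a))
              = ∑ a, y (i, a) * (((P i)⁻¹ *ᵥ fun b => y (i, b)) a) := rfl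
          rw [hdp, Finset.mul_sum]
          exact Finset.sum_congr rfl fun a _ => by ring
  have hAform : ∀ p : Fin N × Fin n, (Acal *ᵥ x) p = w p.1 p.2 := by
    intro p
    show ∑ q : Fin N × Fin n, Acal p q * x q = _
    rw [Fintype.sum_prod_type]
    have hwp : w p.1 p.2 = ∑ j, L p.1 j * (((A * Pbar p.1 * (P j)⁻¹) *ᵥ X j) p.2) := by
      rw [hwi p.1, hzi p.1]
      have hlin : (A * Pbar p.1) *ᵥ (∑ j, L p.1 j • ((P j)⁻¹ *ᵥ X j))
          = ∑ j, L p.1 j • ((A * Pbar p.1) *ᵥ ((P j)⁻¹ *ᵥ X j)) := by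
        rw [mulVec_sum']
        exact Finset.sum_congr rfl fun j _ => mulVec_smul _ _ _
      rw [hlin, Finset.sum_apply]
      exact Finset.sum_congr rfl fun j _ => by
        rw [Pi.smul_apply, smul_eq_mul, mulVec_mulVec]
    rw [hwp]
    refine Finset.sum_congr rfl fun j _ => ?_
    have : (((A * Pbar p.1 * (P j)⁻¹) *ᵥ X j) p.2)
        = ∑ b, (A * Pbar p.1 * (P j)⁻¹) p.2 b * X j b := rfl
    rw [this, Finset.mul_sum]
    exact Finset.sum_congr rfl fun b _ => by
      rw [hAcal]
      ring
  have hLHS : x ⬝ᵥ (Acalᵀ * Qcal * Acal) *ᵥ x = ∑ i, qv i * (w i ⬝ᵥ (P i)⁻¹ *ᵥ w i) := by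
    calc x ⬝ᵥ (Acalᵀ * Qcal * Acal) *ᵥ x
        = x ⬝ᵥ Acalᵀ *ᵥ ((Qcal * Acal) *ᵥ x) := by
          rw [mulVec_mulVec, ← Matrix.mul_assoc]
      _ = (Acal *ᵥ x) ⬝ᵥ (Qcal * Acal) *ᵥ x := dot_transpose_mulVec _ _ _
      _ = (Acal *ᵥ x) ⬝ᵥ Qcal *ᵥ (Acal *ᵥ x) := by rw [mulVec_mulVec]
      _ = ∑ i, qv i * ((fun a => (Acal *ᵥ x) (i, a)) ⬝ᵥ (P i)⁻¹ *ᵥ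
            fun a => (Acal *ᵥ x) (i, a)) := hQform _
      _ = ∑ i, qv i * (w i ⬝ᵥ (P i)⁻¹ *ᵥ w i) := by
          refine Finset.sum_congr rfl fun i _ => ?_
          have hfun : (fun a => (Acal *ᵥ x) (i, a)) = w i := funext fun a => hAform (i, a)
          rw [hfun]
  have hRHS : x ⬝ᵥ Qcal *ᵥ x = ∑ j, qv j * g j := by
    rw [hQform x]
  -- per-node inequality (a): contraction through the Riccati update
  have hA1 : ∀ i, w i ⬝ᵥ (P i)⁻¹ *ᵥ w i ≤ (1 - ε) * (z i ⬝ᵥ Pbar i *ᵥ z i) := by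
    intro i
    have h := psd_form (hKey i) (z i)
    rw [sub_mulVec, dotProduct_sub, smul_mulVec, dotProduct_smul, smul_eq_mul,
      sub_nonneg] at h
    have hident : z i ⬝ᵥ (Pbar i * Aᵀ * (P i)⁻¹ * (A * Pbar i)) *ᵥ z i
        = w i ⬝ᵥ (P i)⁻¹ *ᵥ w i := by
      have hPbT : (Pbar i)ᵀ = Pbar i := herm_transpose (hPbarPD i).1
      have hT : Pbar i * Aᵀ * (P i)⁻¹ * (A * Pbar i)
          = (A * Pbar i)ᵀ * ((P i)⁻¹ * (A * Pbar i)) := by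
        rw [transpose_mul, hPbT, Matrix.mul_assoc]
      calc z i ⬝ᵥ (Pbar i * Aᵀ * (P i)⁻¹ * (A * Pbar i)) *ᵥ z i
          = z i ⬝ᵥ (A * Pbar i)ᵀ *ᵥ (((P i)⁻¹ * (A * Pbar i)) *ᵥ z i) := by
            rw [mulVec_mulVec, hT]
        _ = ((A * Pbar i) *ᵥ z i) ⬝ᵥ ((P i)⁻¹ * (A * Pbar i)) *ᵥ z i :=
            dot_transpose_mulVec _ _ _
        _ = ((A * Pbar i) *ᵥ z i) ⬝ᵥ (P i)⁻¹ *ᵥ ((A * Pbar i) *ᵥ z i) := by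
            rw [mulVec_mulVec]
        _ = w i ⬝ᵥ (P i)⁻¹ *ᵥ w i := by rw [hwi i]
    rw [← hident]
    exact h
  -- per-node inequality (b): Jensen-type inequality for the harmonic mean
  have hB1 : ∀ i, z i ⬝ᵥ Pbar i *ᵥ z i ≤ ∑ j, L i j * g j := by
    intro i
    set y : Fin n → ℝ := Pbar i *ᵥ z i with hy
    have hPbT : (Pbar i)ᵀ = Pbar i := herm_transpose (hPbarPD i).1
    have h0 : 0 ≤ ∑ j, L i j * ((X j - y) ⬝ᵥ (P j)⁻¹ *ᵥ (X j - y)) :=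
      Finset.sum_nonneg fun j _ =>
        mul_nonneg (hLnonneg i j) (psd_form (hPinvPD j).posSemidef _)
    have hexp : ∀ j, (X j - y) ⬝ᵥ (P j)⁻¹ *ᵥ (X j - y)
        = g j - 2 * (y ⬝ᵥ (P j)⁻¹ *ᵥ X j) + y ⬝ᵥ (P j)⁻¹ *ᵥ y := by
      intro j
      have hsymj : ((P j)⁻¹)ᵀ = (P j)⁻¹ := herm_transpose (hPinvPD j).1
      rw [mulVec_sub, dotProduct_sub, sub_dotProduct, sub_dotProduct,
        dot_symm hsymj (X j) y]
      rw [hgi j]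
      ring
    have hyz : y ⬝ᵥ z i = z i ⬝ᵥ Pbar i *ᵥ z i := by
      rw [hy, dotProduct_comm]
    have hsum1 : ∑ j, L i j * (y ⬝ᵥ (P j)⁻¹ *ᵥ X j) = y ⬝ᵥ z i := by
      rw [hzi i, dotProduct_sum']
      exact Finset.sum_congr rfl fun j _ => by
        rw [dotProduct_smul, smul_eq_mul]
    have hMy : y ⬝ᵥ Mm i *ᵥ y = z i ⬝ᵥ Pbar i *ᵥ z i := by
      have : Mm i *ᵥ y = z i := by
        rw [hy, mulVec_mulVec, hMmPbar i, one_mulVec]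
      rw [this, hy, dotProduct_comm]
    have hsum2 : ∑ j, L i j * (y ⬝ᵥ (P j)⁻¹ *ᵥ y) ≤ z i ⬝ᵥ Pbar i *ᵥ z i := by
      rw [← hMy]
      have hMv : y ⬝ᵥ Mm i *ᵥ y
          = ∑ j, L i j * (y ⬝ᵥ ((P j)⁻¹ + (C j)ᵀ * (R j)⁻¹ * C j) *ᵥ y) := by
        rw [hMmi i, sum_mulVec', dotProduct_sum']
        exact Finset.sum_congr rfl fun j _ => by
          rw [smul_mulVec, dotProduct_smul, smul_eq_mul]
      rw [hMv]
      refine Finset.sum_le_sum fun j _ => ?_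
      refine mul_le_mul_of_nonneg_left ?_ (hLnonneg i j)
      rw [add_mulVec, dotProduct_add]
      have := psd_form (hCT j) y
      linarith
    have hS : ∑ j, L i j * ((X j - y) ⬝ᵥ (P j)⁻¹ *ᵥ (X j - y))
        = (∑ j, L i j * g j) - 2 * (y ⬝ᵥ z i) + ∑ j, L i j * (y ⬝ᵥ (P j)⁻¹ *ᵥ y) := by
      calc ∑ j, L i j * ((X j - y) ⬝ᵥ (P j)⁻¹ *ᵥ (X j - y))
          = ∑ j, (L i j * g j - 2 * (L i j * (y ⬝ᵥ (P j)⁻¹ *ᵥ X j))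
              + L i j * (y ⬝ᵥ (P j)⁻¹ *ᵥ y)) := by
            refine Finset.sum_congr rfl fun j _ => ?_
            rw [hexp j]
            ring
        _ = (∑ j, L i j * g j) - 2 * (y ⬝ᵥ z i) + ∑ j, L i j * (y ⬝ᵥ (P j)⁻¹ *ᵥ y) := by
            rw [Finset.sum_add_distrib, Finset.sum_sub_distrib, ← Finset.mul_sum, hsum1]
    rw [hS] at h0
    linarith [hyz ▸ h0, hsum2]
  -- assemble
  rw [hLHS, hRHS]
  calc ∑ i, qv i * (w i ⬝ᵥ (P i)⁻¹ *ᵥ w i)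
      ≤ ∑ i, qv i * ((1 - ε) * ∑ j, L i j * g j) := by
        refine Finset.sum_le_sum fun i _ => ?_
        refine mul_le_mul_of_nonneg_left ?_ (hqv i).le
        exact (hA1 i).trans (mul_le_mul_of_nonneg_left (hB1 i) (by linarith))
    _ = (1 - ε) * ∑ i, ∑ j, qv i * L i j * g j := by
        rw [Finset.mul_sum]
        refine Finset.sum_congr rfl fun i _ => ?_
        rw [Finset.mul_sum, Finset.mul_sum, Finset.mul_sum]
        exact Finset.sum_congr rfl fun j _ => by ring
    _ = (1 - ε) * ∑ j, ∑ i, qv i * L i j * g j := by rw [Finset.sum_comm]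
    _ = (1 - ε) * ∑ j, qv j * g j := by
        congr 1
        refine Finset.sum_congr rfl fun j _ => ?_
        rw [← Finset.sum_mul, hqL j]
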